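/- For the cycle graph C_n on n ≥ 3 vertices, γ(C_n) = n / (⌊n/2⌋ · ⌈n/2⌉). -/

import Mathlib

open Finset SimpleGraph
open Fin.CommRing

/-- `max_{uv ∈ E(G)} |x_u - x_v|` (as a real supremum over adjacent pairs). -/
noncomputable def edgeSup {V : Type*} (G : SimpleGraph V) (x : V → ℝ) : ℝ :=
  ⨆ p : {p : V × V // G.Adj p.1 p.2}, |x p.1.1 - x p.1.2|

/-- The `l_∞`-smoothing parameter `γ(G)`. -/
noncomputable def gamma {V : Type*} [Fintype V] (G : SimpleGraph V) : ℝ :=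
  sInf {y | ∃ x : V → ℝ, (∑ v, x v) = 0 ∧ (⨆ v, |x v|) = 1 ∧ y = edgeSup G x}

/-- Transmission of a vertex: sum of graph distances to all vertices. -/
noncomputable def transmission {V : Type*} [Fintype V] (G : SimpleGraph V) (u : V) : ℕ :=
  ∑ v, G.dist u v

/-- cycle distance on `Fin n` -/
private def cd (n : ℕ) (u v : Fin n) : ℕ := min (v - u).val (u - v).val

private lemma hmod (n : ℕ) (x : ℕ) (hx : x < 2*n) :
    x % n = x ∧ x < n ∨ x % n = x - n ∧ n ≤ x := by
  rcases Nat.lt_or_ge x n with h | h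
  · exact Or.inl ⟨Nat.mod_eq_of_lt h, h⟩
  · refine Or.inr ⟨?_, h⟩
    rw [Nat.mod_eq_sub_mod h, Nat.mod_eq_of_lt (by omega)]

private lemma sub_add_val {m : ℕ} (a b : Fin (m+1)) :
    (a - b).val + (b - a).val = 0 ∨ (a - b).val + (b - a).val = (m+1) := by
  have h1 : (a - b) + (b - a) = 0 := by ring
  have h2 : ((a - b) + (b - a)).val = ((a-b).val + (b-a).val) % (m+1) := by
    rw [Fin.add_def]
  have h3 : ((a-b).val + (b-a).val) % (m+1) = 0 := by rw [← h2, h1]; rfl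
  have h4 := (a - b).isLt
  have h5 := (b - a).isLt
  have := hmod (m+1) ((a-b).val + (b-a).val) (by omega)
  omega

private lemma step_le {m : ℕ} (u a b : Fin (m+2)) (h : (cycleGraph (m+2)).Adj a b) :
    cd (m+2) u b ≤ cd (m+2) u a + 1 := by
  rw [cycleGraph_adj'] at h
  have hb1 : (b - u) = (b - a) + (a - u) := by ring
  have hb2 : (u - b) = (u - a) + (a - b) := by ring
  have e1 : (b-u).val = ((b-a).val + (a-u).val) % (m+2) := by rw [hb1, Fin.add_def]
  have e2 : (u-b).val = ((u-a).val + (a-b).val) % (m+2) := by rw [hb2, Fin.add_def]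
  have hab := sub_add_val a b
  have hau := sub_add_val a u
  have l1 := (b-a).isLt
  have l2 := (a-b).isLt
  have l3 := (a-u).isLt
  have l4 := (u-a).isLt
  have m1 := hmod (m+2) ((b-a).val + (a-u).val) (by omega)
  have m2 := hmod (m+2) ((u-a).val + (a-b).val) (by omega)
  unfold cd
  omega

private lemma cd_self {m : ℕ} (u : Fin (m+1)) : cd (m+1) u u = 0 := by
  simp [cd, sub_self]

private lemma exists_walk {m : ℕ} (u : Fin (m+2)) (k : ℕ) :
    ∃ w : (cycleGraph (m+2)).Walk u (u + (k : Fin (m+2))), w.length = k := by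
  induction k with
  | zero =>
    refine ⟨SimpleGraph.Walk.nil.copy rfl (by push_cast; ring), by simp⟩
  | succ k ih =>
    obtain ⟨w, hw⟩ := ih
    have hadj : (cycleGraph (m+2)).Adj (u + (k : Fin (m+2))) (u + (k : Fin (m+2)) + 1) := by
      rw [cycleGraph_adj']
      right
      have : u + (k : Fin (m+2)) + 1 - (u + (k : Fin (m+2))) = 1 := by ring
      rw [this]
      simp [Fin.val_one]
    refine ⟨(w.concat hadj).copy rfl (by push_cast; ring), by simp [hw]⟩

private lemma reachable' {m : ℕ} (u v : Fin (m+2)) : (cycleGraph (m+2)).Reachable u v := by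
  obtain ⟨w, -⟩ := exists_walk u (v - u).val
  exact ⟨w.copy rfl (by rw [Fin.cast_val_eq_self]; try ring)⟩

private lemma dist_le_cd {m : ℕ} (u v : Fin (m+2)) :
    (cycleGraph (m+2)).dist u v ≤ cd (m+2) u v := by
  have h1 : (cycleGraph (m+2)).dist u v ≤ (v - u).val := by
    obtain ⟨w, hw⟩ := exists_walk u (v - u).val
    have := SimpleGraph.dist_le (w.copy rfl (by rw [Fin.cast_val_eq_self]; try ring))
    simpa [hw] using this
  have h2 : (cycleGraph (m+2)).dist u v ≤ (u - v).val := by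
    obtain ⟨w, hw⟩ := exists_walk v (u - v).val
    have := SimpleGraph.dist_le (w.copy rfl (by rw [Fin.cast_val_eq_self]; try ring))
    rw [SimpleGraph.dist_comm]
    simpa [hw] using this
  exact le_min h1 h2

private lemma cd_le_walk {m : ℕ} (u : Fin (m+2)) {a b : Fin (m+2)}
    (w : (cycleGraph (m+2)).Walk a b) :
    cd (m+2) u b ≤ cd (m+2) u a + w.length := by
  induction w with
  | nil => simp
  | cons h p ih =>
    rename_i x y z
    have := step_le u x y h
    simp only [SimpleGraph.Walk.length_cons]
    omega

private lemma dist_eq_cd {m : ℕ} (u v : Fin (m+2)) :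
    (cycleGraph (m+2)).dist u v = cd (m+2) u v := by
  refine le_antisymm (dist_le_cd u v) ?_
  obtain ⟨w, hw⟩ := (reachable' u v).exists_walk_length_eq_dist
  have h2 := cd_le_walk u w
  rw [hw, cd_self u] at h2
  simpa using h2

private lemma sum_min (n : ℕ) :
    ∑ k ∈ Finset.range n, min k (n - k) = (n/2) * ((n+1)/2) := by
  induction n using Nat.twoStepInduction with
  | zero => simp
  | one => simp
  | more n ih _ =>
    have key : ∑ k ∈ Finset.range (n+2), min k (n+2-k)
        = (∑ k ∈ Finset.range n, min k (n-k)) + (n + 1) := by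
      rw [Finset.sum_range_succ' (fun k => min k (n+2-k)) (n+1)]
      have h2 : ∀ k ∈ Finset.range (n+1), min (k+1) (n+2-(k+1)) = min k (n-k) + 1 := by
        intro k hk
        simp only [Finset.mem_range] at hk
        omega
      rw [Finset.sum_congr rfl h2, Finset.sum_add_distrib]
      rw [Finset.sum_range_succ (fun k => min k (n-k)) n]
      simp
    rw [key, ih]
    have h1 : (n+2)/2 = n/2 + 1 := by omega
    have h3 : n/2 + (n+1)/2 = n := by omega
    have h4 : (n+2+1)/2 = (n+1)/2 + 1 := by omega
    rw [h1, h4]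
    nlinarith [h3]

private lemma sum_cd {m : ℕ} (u : Fin (m+2)) :
    ∑ v : Fin (m+2), cd (m+2) u v = ((m+2)/2) * ((m+3)/2) := by
  have e : ∑ v : Fin (m+2), cd (m+2) u v
      = ∑ z : Fin (m+2), min z.val ((-z).val) := by
    rw [← Equiv.sum_comp (Equiv.subRight u) (fun z => min z.val ((-z).val))]
    refine Finset.sum_congr rfl fun v _ => ?_
    simp only [Equiv.subRight_apply, cd]
    congr 1
    have : u - v = -(v - u) := by ring
    rw [this]
  rw [e]
  have e2 : ∀ z : Fin (m+2), min z.val ((-z).val) = min z.val ((m+2) - z.val) := by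
    intro z
    rw [Fin.neg_def]
    simp only
    have hz := z.isLt
    rcases Nat.eq_zero_or_pos z.val with h | h
    · simp [h]
    · rw [Nat.mod_eq_of_lt (by omega)]
  calc ∑ z : Fin (m+2), min z.val ((-z).val)
      = ∑ z : Fin (m+2), min z.val ((m+2) - z.val) :=
        Finset.sum_congr rfl (fun z _ => e2 z)
    _ = ∑ k ∈ Finset.range (m+2), min k ((m+2) - k) := by
        rw [← Fin.sum_univ_eq_sum_range (fun k => min k ((m+2)-k)) (m+2)]
    _ = ((m+2)/2) * ((m+3)/2) := sum_min (m+2)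

section
variable {m : ℕ}

private lemma abs_sub_le_edgeSup (x : Fin (m+2) → ℝ) {a b : Fin (m+2)}
    (h : (cycleGraph (m+2)).Adj a b) : |x a - x b| ≤ edgeSup (cycleGraph (m+2)) x := by
  unfold edgeSup
  exact le_ciSup (f := fun p : {p : Fin (m+2) × Fin (m+2) // (cycleGraph (m+2)).Adj p.1 p.2} =>
    |x p.1.1 - x p.1.2|) (Set.Finite.bddAbove (Set.finite_range _)) ⟨(a,b), h⟩

private lemma walk_bound (x : Fin (m+2) → ℝ) {a b : Fin (m+2)}
    (w : (cycleGraph (m+2)).Walk a b) :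
    |x a - x b| ≤ edgeSup (cycleGraph (m+2)) x * w.length := by
  induction w with
  | nil => simp
  | cons h p ih =>
    rename_i c d e
    have h1 := abs_sub_le_edgeSup x h
    have h2 : |x c - x e| ≤ |x c - x d| + |x d - x e| := abs_sub_le _ _ _
    simp only [SimpleGraph.Walk.length_cons]
    push_cast
    nlinarith [ih]

private lemma dist_bound (x : Fin (m+2) → ℝ) (a b : Fin (m+2)) :
    |x a - x b| ≤ edgeSup (cycleGraph (m+2)) x * (cycleGraph (m+2)).dist a b := by
  obtain ⟨w, hw⟩ := (reachable' a b).exists_walk_length_eq_dist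
  simpa [hw] using walk_bound x w

private lemma lower_bound (x : Fin (m+2) → ℝ) (hs : ∑ v, x v = 0)
    (hsup : (⨆ v, |x v|) = 1) :
    ((m+2 : ℕ) : ℝ) ≤ edgeSup (cycleGraph (m+2)) x * (((m+2)/2) * ((m+3)/2) : ℕ) := by
  obtain ⟨u, hu⟩ := Finite.exists_max (fun v : Fin (m+2) => |x v|)
  have h1 : |x u| = 1 := by
    rw [← hsup]
    exact le_antisymm (le_ciSup (f := fun v : Fin (m+2) => |x v|)
      (Set.Finite.bddAbove (Set.finite_range _)) u) (ciSup_le hu)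
  have hsum : ∑ v : Fin (m+2), ((cycleGraph (m+2)).dist u v : ℝ)
      = ((((m+2)/2) * ((m+3)/2) : ℕ) : ℝ) := by
    rw [← Nat.cast_sum]
    congr 1
    rw [← sum_cd u]
    exact Finset.sum_congr rfl fun v _ => dist_eq_cd u v
  rcases (abs_eq (by norm_num)).mp h1 with h | h
  · have key : ((m+2 : ℕ) : ℝ) = ∑ v : Fin (m+2), (x u - x v) := by
      rw [Finset.sum_sub_distrib, hs, h]
      simp
    rw [key, ← hsum, Finset.mul_sum]
    exact Finset.sum_le_sum fun v _ => (le_abs_self _).trans (dist_bound x u v)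
  · have key : ((m+2 : ℕ) : ℝ) = ∑ v : Fin (m+2), (x v - x u) := by
      rw [Finset.sum_sub_distrib, hs, h]
      simp
    rw [key, ← hsum, Finset.mul_sum]
    refine Finset.sum_le_sum fun v _ => ?_
    calc x v - x u ≤ |x v - x u| := le_abs_self _
    _ = |x u - x v| := abs_sub_comm _ _
    _ ≤ _ := dist_bound x u v

private lemma cd_zero_le (v : Fin (m+2)) : cd (m+2) (0 : Fin (m+2)) v ≤ (m+2)/2 := by
  have h := sub_add_val (0 : Fin (m+2)) v
  have h1 : cd (m+2) (0:Fin (m+2)) v ≤ ((v - 0 : Fin (m+2))).val := min_le_left _ _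
  have h2 : cd (m+2) (0:Fin (m+2)) v ≤ (((0:Fin (m+2)) - v)).val := min_le_right _ _
  omega

end

theorem stmt3 (n : ℕ) (hn : 3 ≤ n) :
    gamma (SimpleGraph.cycleGraph n) =
      (n : ℝ) / (((n / 2 : ℕ) : ℝ) * (((n + 1) / 2 : ℕ) : ℝ)) := by
  obtain ⟨m, rfl⟩ : ∃ m, n = m + 2 := ⟨n - 2, by omega⟩
  clear hn
  set T : ℕ := ((m+2)/2) * ((m+3)/2) with hTdef
  have hT : 0 < T := Nat.mul_pos (by omega) (by omega)
  have hTR : (0:ℝ) < (T : ℝ) := by exact_mod_cast hT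
  set c : ℝ := ((m+2 : ℕ) : ℝ) / (T : ℝ) with hcdef
  have hc : c * (T : ℝ) = ((m+2 : ℕ) : ℝ) := div_mul_cancel₀ _ (ne_of_gt hTR)
  have hc0 : 0 ≤ c := div_nonneg (by positivity) (le_of_lt hTR)
  -- the right-hand side equals c
  have hrhs : ((m+2 : ℕ) : ℝ) / (((((m+2)) / 2 : ℕ) : ℝ) * ((((m+2) + 1) / 2 : ℕ) : ℝ)) = c := by
    rw [hcdef, hTdef]
    push_cast
    norm_num
  rw [hrhs]
  -- the optimal vector
  set x₀ : Fin (m+2) → ℝ := fun v => 1 - c * (cd (m+2) 0 v : ℝ) with hx₀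
  have hcdle : ∀ v : Fin (m+2), c * (cd (m+2) 0 v : ℝ) ≤ 2 := by
    intro v
    have hnat : (m+2) * cd (m+2) 0 v ≤ 2 * T := by
      calc (m+2) * cd (m+2) 0 v ≤ (m+2) * ((m+2)/2) :=
            Nat.mul_le_mul_left _ (cd_zero_le v)
      _ ≤ (2 * ((m+3)/2)) * ((m+2)/2) := Nat.mul_le_mul_right _ (by omega)
      _ = 2 * T := by rw [hTdef]; ring
    have hcast : ((m+2 : ℕ) : ℝ) * (cd (m+2) 0 v : ℝ) ≤ 2 * (T : ℝ) := by
      exact_mod_cast hnat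
    rw [hcdef, div_mul_eq_mul_div, div_le_iff₀ hTR]
    calc ((m+2 : ℕ) : ℝ) * (cd (m+2) 0 v : ℝ) ≤ 2 * (T : ℝ) := hcast
    _ = 2 * (T:ℝ) := rfl
  have hsum0 : (∑ v, x₀ v) = 0 := by
    rw [hx₀]
    simp only [Finset.sum_sub_distrib]
    rw [← Finset.mul_sum]
    have : ∑ v : Fin (m+2), (cd (m+2) 0 v : ℝ) = (T : ℝ) := by
      rw [← Nat.cast_sum, sum_cd (0 : Fin (m+2))]
    rw [this, hc]
    simp [Finset.card_univ]
  have hx00 : x₀ 0 = 1 := by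
    rw [hx₀]
    simp [cd_self]
  have hxle : ∀ v, |x₀ v| ≤ 1 := by
    intro v
    rw [hx₀]
    have h1 : 0 ≤ c * (cd (m+2) 0 v : ℝ) := by positivity
    have h2 := hcdle v
    rw [abs_le]
    constructor <;> simp only <;> linarith
  have hsup1 : (⨆ v, |x₀ v|) = 1 := by
    refine le_antisymm (ciSup_le hxle) ?_
    have := le_ciSup (f := fun v : Fin (m+2) => |x₀ v|)
      (Set.Finite.bddAbove (Set.finite_range _)) 0
    rw [hx00] at this
    simpa using this
  -- edgeSup x₀ ≤ c
  haveI hne : Nonempty {p : Fin (m+2) × Fin (m+2) // (cycleGraph (m+2)).Adj p.1 p.2} := by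
    refine ⟨⟨(0, 1), ?_⟩⟩
    rw [cycleGraph_adj']
    right
    simp [Fin.val_one]
  have hesle : edgeSup (cycleGraph (m+2)) x₀ ≤ c := by
    unfold edgeSup
    refine ciSup_le fun p => ?_
    obtain ⟨⟨a, b⟩, hab⟩ := p
    simp only
    have s1 := step_le 0 a b hab
    have s2 := step_le 0 b a hab.symm
    have habs : |(cd (m+2) 0 b : ℝ) - (cd (m+2) 0 a : ℝ)| ≤ 1 := by
      rw [abs_le]
      constructor
      · have : (cd (m+2) 0 a : ℝ) ≤ (cd (m+2) 0 b : ℝ) + 1 := by exact_mod_cast s2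
        linarith
      · have : (cd (m+2) 0 b : ℝ) ≤ (cd (m+2) 0 a : ℝ) + 1 := by exact_mod_cast s1
        linarith
    have : x₀ a - x₀ b = c * ((cd (m+2) 0 b : ℝ) - (cd (m+2) 0 a : ℝ)) := by
      rw [hx₀]; ring
    rw [this, abs_mul, abs_of_nonneg hc0]
    calc c * |(cd (m+2) 0 b : ℝ) - (cd (m+2) 0 a : ℝ)| ≤ c * 1 :=
          mul_le_mul_of_nonneg_left habs hc0
    _ = c := mul_one c
  have hesge : c ≤ edgeSup (cycleGraph (m+2)) x₀ := by
    have := lower_bound x₀ hsum0 hsup1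
    rw [hcdef, div_le_iff₀ hTR]
    exact this
  have heseq : edgeSup (cycleGraph (m+2)) x₀ = c := le_antisymm hesle hesge
  have hmem : c ∈ {y | ∃ x : Fin (m+2) → ℝ,
      (∑ v, x v) = 0 ∧ (⨆ v, |x v|) = 1 ∧ y = edgeSup (cycleGraph (m+2)) x} :=
    ⟨x₀, hsum0, hsup1, heseq.symm⟩
  have hlb : ∀ y ∈ {y | ∃ x : Fin (m+2) → ℝ,
      (∑ v, x v) = 0 ∧ (⨆ v, |x v|) = 1 ∧ y = edgeSup (cycleGraph (m+2)) x}, c ≤ y := by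
    rintro y ⟨x, hxs, hxsup, rfl⟩
    have := lower_bound x hxs hxsup
    rw [hcdef, div_le_iff₀ hTR]
    exact this
  unfold gamma
  exact le_antisymm (csInf_le ⟨c, hlb⟩ hmem) (le_csInf ⟨c, hmem⟩ hlb)
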